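/- arXiv:0810.2767 — 2 statements merged into one kernel-verified Lean document; each statement's English description precedes it below -/
import Mathlib

section
/- For 1 ≤ k ≤ n, the Jucys-Murphy element ξ_k of F[G_n] commutes with every element of the subgroup G'_{n-k} consisting of elements ((g_1,...,g_n), σ) with g_i = 1 for i ≤ k and σ fixing 1,...,k. -/
open MonoidAlgebra

/-- The action of `S_n` on `G^n` by permuting coordinates: `(w • g) i = g (w⁻¹ i)`. -/
def permHom (G : Type*) [Group G] (n : ℕ) : Equiv.Perm (Fin n) →* MulAut (Fin n → G) where
  toFun σ :=
    { toFun := fun g => g ∘ σ.symm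
      invFun := fun g => g ∘ σ
      left_inv := fun g => by ext i; simp
      right_inv := fun g => by ext i; simp
      map_mul' := fun g h => rfl }
  map_one' := by ext g i; rfl
  map_mul' := fun σ τ => by ext g i; simp [Equiv.Perm.mul_def]

/-- The wreath product `G_n = G^n ⋊ S_n`. -/
abbrev Wreath (G : Type*) [Group G] (n : ℕ) :=
  SemidirectProduct (Fin n → G) (Equiv.Perm (Fin n)) (permHom G n)

/-- `h^{(i)} ∈ G^n`: the tuple with `h` in the `i`-th coordinate and `1` elsewhere. -/
def coordEl {G : Type*} [Group G] {n : ℕ} (i : Fin n) (h : G) : Fin n → G :=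
  fun j => if j = i then h else 1

/-- The generalized Jucys-Murphy element
`ξ_k = Σ_{l>k} Σ_{h∈G} (h^{(k)} (h⁻¹)^{(l)}, (k,l)) ∈ F[G_n]`. -/
noncomputable def jmElem (F : Type*) [Field F] (G : Type*) [Group G] [Fintype G] (n : ℕ)
    (k : Fin n) : MonoidAlgebra F (Wreath G n) :=
  ∑ l ∈ Finset.Ioi k, ∑ h : G,
    single (⟨coordEl k h * coordEl l h⁻¹, Equiv.swap k l⟩ : Wreath G n) 1


/-- For `1 ≤ k ≤ n`, the Jucys-Murphy element `ξ_k` of `F[G_n]` commutes with every element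
`((g_1,…,g_n),σ)` of the subgroup `G'_{n-k}` of `G_n` consisting of the elements with
`g_i = 1` for all `i ≤ k` and `σ` fixing every `i ≤ k`. -/
theorem jmElem_commutes_with_subgroup (F : Type*) [Field F] (G : Type*) [Group G] [Fintype G]
    (n : ℕ) (k : Fin n) (g : Fin n → G) (σ : Equiv.Perm (Fin n))
    (hg : ∀ i : Fin n, i ≤ k → g i = 1) (hσ : ∀ i : Fin n, i ≤ k → σ i = i) :
    single (⟨g, σ⟩ : Wreath G n) (1 : F) * jmElem F G n k =
      jmElem F G n k * single (⟨g, σ⟩ : Wreath G n) (1 : F) := by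
  have hσk : σ k = k := hσ k le_rfl
  have hσmem : ∀ l, l ∈ Finset.Ioi k → σ l ∈ Finset.Ioi k := by
    intro l hl
    simp only [Finset.mem_Ioi] at hl ⊢
    by_contra h
    push_neg at h
    have := σ.injective (hσ (σ l) h)
    exact absurd (this ▸ h) (not_le.mpr hl)
  -- the key pointwise identity
  have key : ∀ l ∈ Finset.Ioi k, ∀ h : G,
      (⟨g, σ⟩ : Wreath G n) * ⟨coordEl k h * coordEl l h⁻¹, Equiv.swap k l⟩ =
      (⟨coordEl k (h * (g (σ l))⁻¹) * coordEl (σ l) (h * (g (σ l))⁻¹)⁻¹,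
        Equiv.swap k (σ l)⟩ : Wreath G n) * ⟨g, σ⟩ := by
    intro l hl h
    simp only [Finset.mem_Ioi] at hl
    have hkl : k ≠ l := ne_of_lt hl
    have hkσl : k ≠ σ l := by
      intro e
      exact hkl (σ.injective (hσk.trans e))
    have hgk : g k = 1 := hg k le_rfl
    refine SemidirectProduct.ext ?_ ?_
    · -- left components
      show g * ((coordEl k h * coordEl l h⁻¹) ∘ σ.symm) =
        (coordEl k (h * (g (σ l))⁻¹) * coordEl (σ l) (h * (g (σ l))⁻¹)⁻¹) *
          (g ∘ (Equiv.swap k (σ l)).symm)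
      have hσsk : σ.symm k = k := by
        rw [Equiv.symm_apply_eq, hσk]
      funext j
      simp only [Pi.mul_apply, Function.comp_apply, coordEl, Equiv.symm_swap]
      by_cases hjk : j = k
      · subst hjk
        rw [hσsk, Equiv.swap_apply_left]
        simp only [if_neg hkl, if_neg hkσl, hgk, ite_self, if_pos]
        group
      · by_cases hjl : j = σ l
        · subst hjl
          rw [Equiv.symm_apply_apply, Equiv.swap_apply_right]
          simp only [if_neg (Ne.symm hkl), if_neg (Ne.symm hkσl), hgk, if_pos]
          group
        · have h1 : σ.symm j ≠ k := by
            intro e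
            have := congrArg σ e
            rw [Equiv.apply_symm_apply, hσk] at this
            exact hjk this
          have h2 : σ.symm j ≠ l := fun e => hjl (by rw [← e, Equiv.apply_symm_apply])
          rw [Equiv.swap_apply_of_ne_of_ne hjk hjl]
          simp only [if_neg h1, if_neg h2, if_neg hjk, if_neg hjl]
          group
    · -- right components
      show σ * Equiv.swap k l = Equiv.swap k (σ l) * σ
      rw [Equiv.mul_swap_eq_swap_mul, hσk]
  -- expand and reindex
  unfold jmElem
  simp only [Finset.mul_sum, Finset.sum_mul, single_mul_single, one_mul]
  calc (∑ l ∈ Finset.Ioi k, ∑ h : G,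
      single ((⟨g, σ⟩ : Wreath G n) * ⟨coordEl k h * coordEl l h⁻¹, Equiv.swap k l⟩) (1 : F))
      = ∑ l ∈ Finset.Ioi k, ∑ h : G,
        single ((⟨coordEl k h * coordEl (σ l) h⁻¹, Equiv.swap k (σ l)⟩ : Wreath G n)
          * ⟨g, σ⟩) (1 : F) := by
        refine Finset.sum_congr rfl fun l hl => ?_
        refine Fintype.sum_equiv (Equiv.mulRight (g (σ l))⁻¹) _ _ (fun h => ?_)
        simp only [Equiv.coe_mulRight]
        rw [key l hl h]
    _ = _ := by
        refine Finset.sum_nbij' (fun l => σ l) (fun l => σ.symm l) hσmem ?_ ?_ ?_ ?_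
        · intro l hl
          simp only [Finset.mem_Ioi] at hl ⊢
          by_contra hc
          push_neg at hc
          have := hσ (σ.symm l) hc
          rw [Equiv.apply_symm_apply] at this
          exact absurd (this ▸ hc) (not_le.mpr hl)
        · intro l _; simp
        · intro l _; simp
        · intro l _; rfl
end

section
/- Let I(n,G) = F[Ḡ_n](1−ε_n) be the left ideal of F[Ḡ_n] generated by 1−ε_n, and let Z̄_{0,n} be the center of F[Ḡ_n]. Then I(n,G) ∩ Z̄_{0,n} = Z_{0,n}·(1−ε_1)(1−ε_2)⋯(1−ε_n), where Z_{0,n} is the center of F[G_n]. -/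
open MonoidAlgebra

/-- The group algebra `ℤ[G]`, used as an ambient ring in which `G ∪ {0}` embeds as
`{0} ∪ {single g 1 | g ∈ G}`. -/
abbrev GA (G : Type*) [Group G] := MonoidAlgebra ℤ G

/-- `a` is an entry in `G ∪ {0}`. -/
def IsEnt {G : Type*} [Group G] (a : GA G) : Prop := a = 0 ∨ ∃ g : G, a = single g 1

/-- An `n × n` matrix with entries in `G ∪ {0}` such that every row and every column
contains at most one nonzero entry. -/
def IsRC {G : Type*} [Group G] {n : ℕ} (M : Matrix (Fin n) (Fin n) (GA G)) : Prop :=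
  (∀ i, {j | M i j ≠ 0}.Subsingleton) ∧ (∀ j, {i | M i j ≠ 0}.Subsingleton) ∧
    ∀ i j, IsEnt (M i j)

theorem IsEnt.mul {G : Type*} [Group G] {a b : GA G} (ha : IsEnt a) (hb : IsEnt b) :
    IsEnt (a * b) := by
  rcases ha with ha | ⟨g, rfl⟩
  · exact Or.inl (by simp [ha])
  rcases hb with hb | ⟨g', rfl⟩
  · exact Or.inl (by simp [hb])
  · exact Or.inr ⟨g * g', by simp [MonoidAlgebra.single_mul_single]⟩

theorem exists_of_mul_ne_zero {G : Type*} [Group G] {n : ℕ}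
    {M N : Matrix (Fin n) (Fin n) (GA G)} {i j : Fin n} (h : (M * N) i j ≠ 0) :
    ∃ k, M i k ≠ 0 ∧ N k j ≠ 0 := by
  by_contra hc
  push_neg at hc
  apply h
  rw [Matrix.mul_apply]
  refine Finset.sum_eq_zero fun k _ => ?_
  by_cases hk : M i k = 0
  · simp [hk]
  · simp [hc k hk]

/-- The semigroup `Ḡ_n` of `n × n` matrices over `G ∪ {0}` with at most one nonzero entry
in each row and each column, realized as a submonoid of the matrix ring over `ℤ[G]`. -/
def GBar (G : Type*) [Group G] (n : ℕ) : Submonoid (Matrix (Fin n) (Fin n) (GA G)) where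
  carrier := {M | IsRC M}
  one_mem' := by
    have key : ∀ a b : Fin n, (1 : Matrix (Fin n) (Fin n) (GA G)) a b ≠ 0 → a = b := by
      intro a b h
      by_contra hab
      simp [Matrix.one_apply, hab] at h
    refine ⟨fun i => ?_, fun j => ?_, fun i j => ?_⟩
    · intro a ha b hb
      exact (key i a ha).symm.trans (key i b hb)
    · intro a ha b hb
      exact (key a j ha).trans (key b j hb).symm
    · by_cases h : i = j
      · subst h
        exact Or.inr ⟨1, by simp [Matrix.one_apply, MonoidAlgebra.one_def]⟩
      · exact Or.inl (by simp [Matrix.one_apply, h])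
  mul_mem' := by
    rintro M N ⟨hMr, hMc, hMe⟩ ⟨hNr, hNc, hNe⟩
    refine ⟨fun i => ?_, fun j => ?_, fun i j => ?_⟩
    · intro a ha b hb
      obtain ⟨k, hk1, hk2⟩ := exists_of_mul_ne_zero ha
      obtain ⟨k', hk1', hk2'⟩ := exists_of_mul_ne_zero hb
      have : k = k' := hMr i hk1 hk1'
      subst this
      exact hNr k hk2 hk2'
    · intro a ha b hb
      obtain ⟨k, hk1, hk2⟩ := exists_of_mul_ne_zero ha
      obtain ⟨k', hk1', hk2'⟩ := exists_of_mul_ne_zero hb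
      have : k = k' := hNc j hk2 hk2'
      subst this
      exact hMc k hk1 hk1'
    · by_cases h : (M * N) i j = 0
      · exact Or.inl h
      obtain ⟨k, hk1, hk2⟩ := exists_of_mul_ne_zero h
      have hsum : (M * N) i j = M i k * N k j := by
        rw [Matrix.mul_apply]
        refine Finset.sum_eq_single k (fun b _ hb => ?_) (by simp)
        by_cases hbz : M i b = 0
        · simp [hbz]
        · exact absurd (hMr i hbz hk1) hb
      rw [hsum]
      exact (hMe i k).mul (hNe k j)

/-- The idempotent `ε_j ∈ Ḡ_n`: the diagonal matrix with `0` in position `(j,j)` and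
`1` in the other diagonal positions. -/
noncomputable def epsEl (G : Type*) [Group G] {n : ℕ} (j : Fin n) : GBar G n :=
  ⟨Matrix.diagonal (fun i => if i = j then 0 else 1), by
    have key : ∀ a b : Fin n,
        Matrix.diagonal (fun i : Fin n => if i = j then (0 : GA G) else 1) a b ≠ 0 → a = b := by
      intro a b h
      by_contra hab
      simp [Matrix.diagonal_apply_ne _ hab] at h
    refine ⟨fun i => ?_, fun k => ?_, fun i k => ?_⟩
    · intro a ha b hb
      exact (key i a ha).symm.trans (key i b hb)
    · intro a ha b hb
      exact (key a k ha).trans (key b k hb).symm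
    · by_cases h : i = k
      · subst h
        by_cases hij : i = j
        · exact Or.inl (by simp [Matrix.diagonal_apply_eq, hij])
        · exact Or.inr ⟨1, by simp [Matrix.diagonal_apply_eq, hij, MonoidAlgebra.one_def]⟩
      · exact Or.inl (by simp [Matrix.diagonal_apply_ne _ h])⟩

/-- The monoid embedding of the wreath product `G_n` into the matrices over `G ∪ {0}`:
`(g,σ)` goes to the matrix whose `(i,j)` entry is `g_i` if `σ(j) = i` and `0` otherwise. -/
noncomputable def wreathHom (G : Type*) [Group G] (n : ℕ) :
    Wreath G n →* Matrix (Fin n) (Fin n) (GA G) where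
  toFun x := Matrix.of fun i j => if x.right j = i then single (x.left i) 1 else 0
  map_one' := by
    apply Matrix.ext
    intro i j
    by_cases h : i = j <;>
      simp [Matrix.one_apply, h, MonoidAlgebra.one_def, eq_comm]
  map_mul' := by
    rintro ⟨a, σ⟩ ⟨b, τ⟩
    apply Matrix.ext
    intro i j
    rw [Matrix.mul_apply, Finset.sum_eq_single (τ j)]
    · simp only [SemidirectProduct.mul_left, SemidirectProduct.mul_right, Matrix.of_apply]
      rw [Equiv.Perm.mul_apply]
      by_cases h : σ (τ j) = i
      · rw [if_pos h, if_pos h]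
        simp only [if_true]
        rw [MonoidAlgebra.single_mul_single]
        congr 1
        have hs : σ.symm i = τ j := by rw [← h]; simp
        simp [permHom, Pi.mul_apply, hs]
      · rw [if_neg h, if_neg h, zero_mul]
    · intro b' _ hb'
      simp only [Matrix.of_apply]
      exact mul_eq_zero_of_right _ (if_neg fun hc => hb' hc.symm)
    · simp

theorem wreathHom_mem_GBar (G : Type*) [Group G] (n : ℕ) (x : Wreath G n) :
    wreathHom G n x ∈ GBar G n := by
  have key : ∀ i j : Fin n, wreathHom G n x i j ≠ 0 → x.right j = i := by
    intro i j h
    by_contra hc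
    simp [wreathHom, hc] at h
  refine ⟨fun i => ?_, fun j => ?_, fun i j => ?_⟩
  · intro a ha b hb
    exact x.right.injective ((key i a ha).trans (key i b hb).symm)
  · intro a ha b hb
    exact (key a j ha).symm.trans (key b j hb)
  · by_cases h : x.right j = i
    · exact Or.inr ⟨x.left i, by simp [wreathHom, h]⟩
    · exact Or.inl (by simp [wreathHom, h])

/-- The wreath product `G_n` as the submonoid of `Ḡ_n` of matrices with exactly one
nonzero entry in each row and each column. -/
noncomputable def GFull (G : Type*) [Group G] (n : ℕ) :
    Submonoid (Matrix (Fin n) (Fin n) (GA G)) :=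
  MonoidHom.mrange (wreathHom G n)

theorem GFull_le_GBar (G : Type*) [Group G] (n : ℕ) : GFull G n ≤ GBar G n := by
  rintro M ⟨x, rfl⟩
  exact wreathHom_mem_GBar G n x

/-- An element of the wreath product, viewed inside `Ḡ_n`. -/
noncomputable def wEl {G : Type*} [Group G] {n : ℕ} (x : Wreath G n) : GBar G n :=
  ⟨wreathHom G n x, wreathHom_mem_GBar G n x⟩

/-- `(1−ε_1)(1−ε_2)⋯(1−ε_n) ∈ F[Ḡ_n]` (the factors pairwise commute). -/
noncomputable def epsBarAll (F : Type*) [Field F] (G : Type*) [Group G] (n : ℕ) :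
    MonoidAlgebra F (GBar G n) :=
  ((List.finRange n).map fun i => 1 - single (epsEl G i) (1 : F)).prod

section Aux

variable {F : Type*} [Field F] {G : Type*} [Group G] {m : ℕ}

theorem epsEl_val (i : Fin m) :
    (epsEl G i).val = Matrix.diagonal (fun a => if a = i then 0 else 1) := rfl

theorem coe_mul' (M N : GBar G m) : (M * N).val = M.val * N.val := rfl

theorem epsEl_mul_apply (i : Fin m) (M : GBar G m) (a b : Fin m) :
    (epsEl G i * M).val a b = if a = i then 0 else M.val a b := by
  rw [coe_mul', epsEl_val, Matrix.diagonal_mul]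
  by_cases h : a = i <;> simp [h]

theorem mul_epsEl_apply (i : Fin m) (M : GBar G m) (a b : Fin m) :
    (M * epsEl G i).val a b = if b = i then 0 else M.val a b := by
  rw [coe_mul', epsEl_val, Matrix.mul_diagonal]
  by_cases h : b = i <;> simp [h]

theorem epsEl_comm (i j : Fin m) : epsEl G i * epsEl G j = epsEl G j * epsEl G i := by
  apply Subtype.ext
  apply Matrix.ext
  intro a b
  rw [coe_mul', coe_mul', epsEl_val, epsEl_val, Matrix.diagonal_mul, Matrix.diagonal_mul,
    Matrix.diagonal_apply, Matrix.diagonal_apply]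
  by_cases h1 : a = i <;> by_cases h2 : a = j <;> by_cases h3 : a = b <;> simp_all

theorem epsEl_idem (i : Fin m) : epsEl G i * epsEl G i = epsEl G i := by
  apply Subtype.ext
  apply Matrix.ext
  intro a b
  rw [coe_mul', epsEl_val, Matrix.diagonal_mul, Matrix.diagonal_apply]
  by_cases h1 : a = i <;> by_cases h3 : a = b <;> simp_all [epsEl_val, Matrix.diagonal_apply]

/-- `M` has a zero row. -/
def NF (M : GBar G m) : Prop := ∃ i, ∀ j, M.val i j = 0

theorem all_rows_of_all_cols {M : GBar G m} (h : ∀ j, ∃ i, M.val i j ≠ 0) :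
    ∀ i, ∃ j, M.val i j ≠ 0 := by
  choose f hf using h
  have hinj : Function.Injective f := by
    intro a b hab
    exact M.prop.1 (f a) (hf a) (hab ▸ hf b)
  have hsurj : Function.Surjective f := Finite.surjective_of_injective hinj
  intro i
  obtain ⟨j, hj⟩ := hsurj i
  exact ⟨j, hj ▸ hf j⟩

theorem all_cols_of_all_rows {M : GBar G m} (h : ∀ i, ∃ j, M.val i j ≠ 0) :
    ∀ j, ∃ i, M.val i j ≠ 0 := by
  choose f hf using h
  have hinj : Function.Injective f := by
    intro a b hab
    exact M.prop.2.1 (f a) (hf a) (hab ▸ hf b)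
  have hsurj : Function.Surjective f := Finite.surjective_of_injective hinj
  intro j
  obtain ⟨i, hi⟩ := hsurj j
  exact ⟨i, hi ▸ hf i⟩

theorem nf_iff_col {M : GBar G m} : NF M ↔ ∃ j, ∀ i, M.val i j = 0 := by
  constructor
  · rintro ⟨i, hi⟩
    by_contra hc
    push_neg at hc
    obtain ⟨j, hj⟩ := all_rows_of_all_cols (M := M) (fun j => by
      obtain ⟨i', hi'⟩ := hc j; exact ⟨i', hi'⟩) i
    exact hj (hi j)
  · rintro ⟨j, hj⟩
    by_contra hc
    rw [NF] at hc
    push_neg at hc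
    obtain ⟨i, hi⟩ := all_cols_of_all_rows (M := M) (fun i => by
      obtain ⟨j', hj'⟩ := hc i; exact ⟨j', hj'⟩) j
    exact hi (hj i)

theorem NF.mul_right {M : GBar G m} (h : NF M) (N : GBar G m) : NF (M * N) := by
  obtain ⟨i, hi⟩ := h
  refine ⟨i, fun j => ?_⟩
  rw [coe_mul', Matrix.mul_apply]
  exact Finset.sum_eq_zero fun k _ => by rw [hi k, zero_mul]

theorem NF.mul_left {N : GBar G m} (h : NF N) (M : GBar G m) : NF (M * N) := by
  rw [nf_iff_col] at h ⊢
  obtain ⟨j, hj⟩ := h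
  refine ⟨j, fun i => ?_⟩
  rw [coe_mul', Matrix.mul_apply]
  exact Finset.sum_eq_zero fun k _ => by rw [hj k, mul_zero]

theorem NF.epsEl (i : Fin m) : NF (epsEl G i) :=
  ⟨i, fun j => by
    rw [epsEl_val]
    by_cases h : i = j
    · subst h; simp [Matrix.diagonal_apply_eq]
    · simp [Matrix.diagonal_apply_ne _ h]⟩

theorem epsEl_mul_of_row_zero {M : GBar G m} {i : Fin m} (h : ∀ j, M.val i j = 0) :
    epsEl G i * M = M := by
  apply Subtype.ext; apply Matrix.ext; intro a b
  rw [epsEl_mul_apply]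
  by_cases ha : a = i
  · subst ha; rw [if_pos rfl, h b]
  · rw [if_neg ha]

theorem mul_epsEl_of_col_zero {M : GBar G m} {j : Fin m} (h : ∀ i, M.val i j = 0) :
    M * epsEl G j = M := by
  apply Subtype.ext; apply Matrix.ext; intro a b
  rw [mul_epsEl_apply]
  by_cases hb : b = j
  · subst hb; rw [if_pos rfl, h a]
  · rw [if_neg hb]

/-- A matrix in `Ḡ_m` with no zero row is in `G_m`. -/
theorem mem_GFull_of_not_nf {M : GBar G m} (h : ¬ NF M) : M.val ∈ GFull G m := by
  have hrow : ∀ i, ∃ j, M.val i j ≠ 0 := by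
    rw [NF] at h; push_neg at h
    intro i; obtain ⟨j, hj⟩ := h i; exact ⟨j, hj⟩
  choose τ hτ using hrow
  have hinj : Function.Injective τ := by
    intro a b hab
    exact M.prop.2.1 (τ a) (hτ a) (by rw [hab]; exact hτ b)
  have hbij : Function.Bijective τ := ⟨hinj, Finite.surjective_of_injective hinj⟩
  set σ : Equiv.Perm (Fin m) := Equiv.ofBijective τ hbij with hσ
  have hent : ∀ i, ∃ g : G, M.val i (τ i) = single g 1 := by
    intro i
    rcases M.prop.2.2 i (τ i) with h0 | ⟨g, hg⟩
    · exact absurd h0 (hτ i)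
    · exact ⟨g, hg⟩
  choose g hg using hent
  refine ⟨⟨g, σ.symm⟩, ?_⟩
  apply Matrix.ext
  intro i j
  show (if σ.symm j = i then single (g i) 1 else 0) = M.val i j
  by_cases hj : j = τ i
  · subst hj
    have : σ.symm (τ i) = i := by
      apply σ.injective; simp [hσ, Equiv.ofBijective_apply]
    rw [if_pos this, hg i]
  · have h2 : σ.symm j ≠ i := by
      intro hc
      apply hj
      have h3 : j = σ i := by rw [← hc, Equiv.apply_symm_apply]
      simpa [hσ, Equiv.ofBijective_apply] using h3
    rw [if_neg h2]
    by_contra hc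
    exact hj (M.prop.1 i (fun hz => hc hz.symm) (hτ i))

theorem wEl_mul (x y : Wreath G m) : wEl (x * y) = wEl x * wEl y :=
  Subtype.ext (map_mul (wreathHom G m) x y)

theorem wEl_one : (wEl 1 : GBar G m) = 1 := Subtype.ext (map_one (wreathHom G m))

theorem wEl_mul_inv (x : Wreath G m) : wEl x * wEl x⁻¹ = 1 := by
  rw [← wEl_mul, mul_inv_cancel, wEl_one]

theorem inv_mul_wEl (x : Wreath G m) : wEl x⁻¹ * wEl x = 1 := by
  rw [← wEl_mul, inv_mul_cancel, wEl_one]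

theorem not_nf_of_mem_GFull {M : GBar G m} (h : M.val ∈ GFull G m) : ¬ NF M := by
  rintro ⟨i, hi⟩
  obtain ⟨x, hx⟩ := h
  have := hi (x.right.symm i)
  rw [← hx] at this
  simp only [wreathHom, MonoidHom.coe_mk, OneHom.coe_mk, Matrix.of_apply] at this
  rw [Equiv.apply_symm_apply, if_pos rfl] at this
  exact one_ne_zero ((MonoidAlgebra.single_eq_zero (m := x.left i)).mp this)

/-- Conjugation: `ε_{σ(i)} W = W ε_i` for `W` in the wreath product. -/
theorem epsEl_conj (x : Wreath G m) (i : Fin m) :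
    epsEl G (x.right i) * wEl x = wEl x * epsEl G i := by
  apply Subtype.ext; apply Matrix.ext; intro a b
  rw [epsEl_mul_apply, mul_epsEl_apply]
  have hW : ∀ a b, (wEl x).val a b = if x.right b = a then single (x.left a) 1 else 0 :=
    fun a b => rfl
  by_cases ha : a = x.right i <;> by_cases hb : b = i
  · subst ha hb; simp
  · subst ha
    rw [if_pos rfl, if_neg hb, hW]
    rw [if_neg (fun hc => hb (x.right.injective hc))]
  · subst hb
    rw [if_neg ha, if_pos rfl, hW, if_neg (fun hc => ha hc.symm)]
  · rw [if_neg ha, if_neg hb]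

open scoped Classical in
/-- The rank of `M`: the number of nonzero rows. -/
noncomputable def rk (M : GBar G m) : ℕ :=
  (Finset.univ.filter fun i => ∃ j, M.val i j ≠ 0).card

open scoped Classical in
theorem rk_epsEl_mul_lt {M : GBar G m} {i : Fin m} (h : ∃ j, M.val i j ≠ 0) :
    rk (epsEl G i * M) < rk M := by
  have hset : (Finset.univ.filter fun a => ∃ j, (epsEl G i * M).val a j ≠ 0) =
      (Finset.univ.filter fun a => ∃ j, M.val a j ≠ 0).erase i := by
    ext a
    simp only [Finset.mem_filter, Finset.mem_univ, true_and, Finset.mem_erase]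
    constructor
    · rintro ⟨j, hj⟩
      rw [epsEl_mul_apply] at hj
      by_cases ha : a = i
      · rw [if_pos ha] at hj; exact absurd rfl hj
      · rw [if_neg ha] at hj; exact ⟨ha, j, hj⟩
    · rintro ⟨ha, j, hj⟩
      exact ⟨j, by rw [epsEl_mul_apply, if_neg ha]; exact hj⟩
  have hmem : i ∈ Finset.univ.filter (fun a => ∃ j, M.val a j ≠ 0) :=
    Finset.mem_filter.mpr ⟨Finset.mem_univ i, h⟩
  unfold rk
  convert Finset.card_erase_lt_of_mem hmem using 2
  convert hset

end Aux
section Aux2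

variable (F : Type*) [Field F] (G : Type*) [Group G] {m : ℕ}

/-- `ε_i` as an element of `F[Ḡ_m]`. -/
noncomputable def epsS (i : Fin m) : MonoidAlgebra F (GBar G m) := single (epsEl G i) 1

/-- `1 - ε_i` as an element of `F[Ḡ_m]`. -/
noncomputable def ffS (i : Fin m) : MonoidAlgebra F (GBar G m) := 1 - epsS F G i

theorem epsBarAll_eq : epsBarAll F G m = ((List.finRange m).map (ffS F G)).prod := rfl

variable {F G}

theorem epsS_comm (i j : Fin m) : epsS F G i * epsS F G j = epsS F G j * epsS F G i := by
  unfold epsS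
  rw [MonoidAlgebra.single_mul_single, MonoidAlgebra.single_mul_single, epsEl_comm]

theorem epsS_idem (i : Fin m) : epsS F G i * epsS F G i = epsS F G i := by
  unfold epsS
  rw [MonoidAlgebra.single_mul_single, epsEl_idem, one_mul]

theorem epsS_commute (i j : Fin m) : Commute (epsS F G i) (epsS F G j) := epsS_comm i j

theorem ffS_commute (i j : Fin m) : Commute (ffS F G i) (ffS F G j) :=
  (Commute.one_left _).sub_left ((Commute.one_right _).sub_right (epsS_commute i j))

theorem commute_prod_ffS {c : MonoidAlgebra F (GBar G m)}
    (h : ∀ i : Fin m, Commute c (ffS F G i)) (l : List (Fin m)) :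
    Commute c ((l.map (ffS F G)).prod) :=
  Commute.list_prod_right _ _ fun y hy => by
    obtain ⟨i, _, rfl⟩ := List.mem_map.mp hy; exact h i

theorem pairwise_commute_ffS (l : List (Fin m)) :
    ((l.map (ffS F G)).Pairwise Commute) := by
  induction l with
  | nil => simp
  | cons h t ih =>
    rw [List.map_cons]
    exact List.Pairwise.cons
      (fun y hy => by obtain ⟨i, _, rfl⟩ := List.mem_map.mp hy; exact ffS_commute h i) ih

theorem epsBar_decomp (i : Fin m) :
    ∃ Q, epsBarAll F G m = ffS F G i * Q ∧ epsBarAll F G m = Q * ffS F G i := by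
  obtain ⟨s, t, hst⟩ := List.append_of_mem (List.mem_finRange i)
  refine ⟨(s.map (ffS F G)).prod * (t.map (ffS F G)).prod, ?_, ?_⟩ <;>
    rw [epsBarAll_eq, hst, List.map_append, List.prod_append, List.map_cons, List.prod_cons]
  · have hc : Commute (ffS F G i) ((s.map (ffS F G)).prod) :=
      commute_prod_ffS (fun j => ffS_commute i j) s
    rw [← mul_assoc, ← hc.eq, mul_assoc]
  · have hc : Commute (ffS F G i) ((t.map (ffS F G)).prod) :=
      commute_prod_ffS (fun j => ffS_commute i j) t
    rw [hc.eq, mul_assoc]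

theorem ffS_mul_epsS (i : Fin m) : ffS F G i * epsS F G i = 0 := by
  rw [ffS, sub_mul, one_mul, epsS_idem, sub_self]

theorem epsS_mul_ffS (i : Fin m) : epsS F G i * ffS F G i = 0 := by
  rw [ffS, mul_sub, mul_one, epsS_idem, sub_self]

theorem epsBar_mul_epsS (i : Fin m) : epsBarAll F G m * epsS F G i = 0 := by
  obtain ⟨Q, -, h2⟩ := epsBar_decomp (F := F) (G := G) i
  rw [h2, mul_assoc, ffS_mul_epsS, mul_zero]

theorem epsS_mul_epsBar (i : Fin m) : epsS F G i * epsBarAll F G m = 0 := by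
  obtain ⟨Q, h1, -⟩ := epsBar_decomp (F := F) (G := G) i
  rw [h1, ← mul_assoc, epsS_mul_ffS, zero_mul]

theorem single_mul_ffS_of_col_zero {M : GBar G m} {j : Fin m} (h : ∀ i, M.val i j = 0)
    (c : F) : single M c * ffS F G j = 0 := by
  rw [ffS, mul_sub, mul_one, epsS, MonoidAlgebra.single_mul_single, mul_one,
    mul_epsEl_of_col_zero h, sub_self]

theorem ffS_mul_single_of_row_zero {M : GBar G m} {i : Fin m} (h : ∀ j, M.val i j = 0)
    (c : F) : ffS F G i * single M c = 0 := by
  rw [ffS, sub_mul, one_mul, epsS, MonoidAlgebra.single_mul_single, one_mul,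
    epsEl_mul_of_row_zero h, sub_self]

theorem single_mul_epsBar {M : GBar G m} (h : NF M) (c : F) :
    single M c * epsBarAll F G m = 0 := by
  obtain ⟨j, hj⟩ := nf_iff_col.mp h
  obtain ⟨Q, h1, -⟩ := epsBar_decomp (F := F) (G := G) j
  rw [h1, ← mul_assoc, single_mul_ffS_of_col_zero hj, zero_mul]

theorem epsBar_mul_single {M : GBar G m} (h : NF M) (c : F) :
    epsBarAll F G m * single M c = 0 := by
  obtain ⟨i, hi⟩ := h
  obtain ⟨Q, -, h2⟩ := epsBar_decomp (F := F) (G := G) i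
  rw [h2, mul_assoc, ffS_mul_single_of_row_zero hi, mul_zero]

variable (F G) in
/-- The submodule of elements supported on matrices with a zero row. -/
def SuppNF (m : ℕ) : Submodule F (MonoidAlgebra F (GBar G m)) where
  carrier := {a | ∀ M : GBar G m, ¬ NF M → a.coeff M = 0}
  add_mem' := fun ha hb M hM => by
    rw [MonoidAlgebra.coeff_add, Finsupp.add_apply, ha M hM, hb M hM, add_zero]
  zero_mem' := fun M hM => rfl
  smul_mem' := fun c a ha M hM => by rw [MonoidAlgebra.coeff_smul, Finsupp.smul_apply, ha M hM, smul_zero]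

theorem SuppNF.mul_mem_left {b : MonoidAlgebra F (GBar G m)} (hb : b ∈ SuppNF F G m)
    (a : MonoidAlgebra F (GBar G m)) : a * b ∈ SuppNF F G m := by
  classical
  intro M hM
  rw [MonoidAlgebra.mul_apply]
  refine Finset.sum_eq_zero fun a₁ h₁ => Finset.sum_eq_zero fun a₂ h₂ => ?_
  dsimp only
  split_ifs with h
  · rw [hb a₂ (fun hnf => hM (h ▸ hnf.mul_left a₁)), mul_zero]
  · rfl

theorem SuppNF.mul_mem_right {a : MonoidAlgebra F (GBar G m)} (ha : a ∈ SuppNF F G m)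
    (b : MonoidAlgebra F (GBar G m)) : a * b ∈ SuppNF F G m := by
  classical
  intro M hM
  rw [MonoidAlgebra.mul_apply]
  refine Finset.sum_eq_zero fun a₁ h₁ => Finset.sum_eq_zero fun a₂ h₂ => ?_
  dsimp only
  split_ifs with h
  · rw [ha a₁ (fun hnf => hM (h ▸ hnf.mul_right a₂)), zero_mul]
  · rfl

theorem single_mem_SuppNF {M : GBar G m} (h : NF M) (c : F) :
    (single M c : MonoidAlgebra F (GBar G m)) ∈ SuppNF F G m := by
  classical
  intro P hP
  rw [MonoidAlgebra.coeff_single, Finsupp.single_apply, if_neg (fun he : M = P => hP (he ▸ h))]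

theorem prod_ffS_sub_one_mem (l : List (Fin m)) :
    ((l.map (ffS F G)).prod : MonoidAlgebra F (GBar G m)) - 1 ∈ SuppNF F G m := by
  induction l with
  | nil => simp only [List.map_nil, List.prod_nil, sub_self]; exact (SuppNF F G m).zero_mem
  | cons h t ih =>
    rw [List.map_cons, List.prod_cons, ffS, sub_mul, one_mul, sub_right_comm]
    exact Submodule.sub_mem _ ih
      (SuppNF.mul_mem_right (single_mem_SuppNF (NF.epsEl h) 1) _)

theorem epsBar_sub_one_mem : epsBarAll F G m - 1 ∈ SuppNF F G m := by
  rw [epsBarAll_eq]; exact prod_ffS_sub_one_mem _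

theorem SuppNF.mul_epsBar {a : MonoidAlgebra F (GBar G m)} (ha : a ∈ SuppNF F G m) :
    a * epsBarAll F G m = 0 := by
  classical
  conv_lhs => rw [← MonoidAlgebra.sum_coeff_single a]
  rw [Finsupp.sum_mul]
  refine Finset.sum_eq_zero fun M hM => ?_
  have hNF : NF M := by
    by_contra hn
    exact Finsupp.mem_support_iff.mp hM (ha M hn)
  exact single_mul_epsBar hNF _

theorem SuppNF.epsBar_mul {a : MonoidAlgebra F (GBar G m)} (ha : a ∈ SuppNF F G m) :
    epsBarAll F G m * a = 0 := by
  classical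
  conv_lhs => rw [← MonoidAlgebra.sum_coeff_single a]
  rw [Finsupp.mul_sum]
  refine Finset.sum_eq_zero fun M hM => ?_
  have hNF : NF M := by
    by_contra hn
    exact Finsupp.mem_support_iff.mp hM (ha M hn)
  exact epsBar_mul_single hNF _

theorem wEl_mul_ffS (x : Wreath G m) (i : Fin m) :
    single (wEl x) (1 : F) * ffS F G i = ffS F G (x.right i) * single (wEl x) 1 := by
  rw [ffS, ffS, mul_sub, mul_one, sub_mul, one_mul]
  congr 1
  rw [epsS, epsS, MonoidAlgebra.single_mul_single, MonoidAlgebra.single_mul_single,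
    ← epsEl_conj]

theorem wEl_mul_prod (x : Wreath G m) (l : List (Fin m)) :
    single (wEl x) (1 : F) * (l.map (ffS F G)).prod =
      ((l.map x.right).map (ffS F G)).prod * single (wEl x) 1 := by
  induction l with
  | nil => simp
  | cons h t ih =>
    rw [List.map_cons, List.prod_cons, List.map_cons, List.map_cons, List.prod_cons,
      ← mul_assoc, wEl_mul_ffS, mul_assoc, ih, ← mul_assoc]

theorem wEl_comm_epsBar (x : Wreath G m) :
    single (wEl x) (1 : F) * epsBarAll F G m = epsBarAll F G m * single (wEl x) 1 := by
  rw [epsBarAll_eq, wEl_mul_prod]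
  congr 1
  have hperm : (((List.finRange m).map x.right).map (ffS F G)).Perm
      ((List.finRange m).map (ffS F G)) := by
    refine List.Perm.map _ ?_
    refine List.perm_of_nodup_nodup_toFinset_eq
      ((List.nodup_finRange m).map x.right.injective) (List.nodup_finRange m) ?_
    ext a
    simp only [List.mem_toFinset, List.mem_map, List.mem_finRange, true_and, iff_true]
    exact ⟨x.right.symm a, x.right.apply_symm_apply a⟩
  exact hperm.prod_eq' (pairwise_commute_ffS _)

end Aux2
section Aux3

variable {F : Type*} [Field F] {G : Type*} [Group G] {m : ℕ}

theorem mem_center_of_single {H : Type*} [Monoid H] {z : MonoidAlgebra F H}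
    (h : ∀ u : H, single u (1 : F) * z = z * single u 1) :
    z ∈ Subalgebra.center F (MonoidAlgebra F H) := by
  rw [Subalgebra.mem_center_iff]
  intro b
  refine MonoidAlgebra.induction_on (motive := fun b => b * z = z * b) b
    (fun g => ?_) (fun f g hf hg => ?_) (fun r f hf => ?_)
  · simpa [MonoidAlgebra.of_apply] using h g
  · show (f + g) * z = z * (f + g)
    rw [add_mul, mul_add]
    rw [show f * z = z * f from hf, show g * z = z * g from hg]
  · show (r • f) * z = z * (r • f)
    rw [smul_mul_assoc, mul_smul_comm, show f * z = z * f from hf]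

theorem single_inv_mul_apply {H : Type*} [Monoid H] (f : MonoidAlgebra F H) {u u' : H}
    (h1 : u * u' = 1) (h2 : u' * u = 1) (p : H) :
    (single u (1 : F) * f).coeff p = f.coeff (u' * p) := by
  rw [MonoidAlgebra.coeff_single_mul_eq_mul_coeff (u' * p) (fun a _ => ?_), one_mul]
  constructor
  · intro ha; rw [← ha, ← mul_assoc, h2, one_mul]
  · intro ha; rw [ha, ← mul_assoc, h1, one_mul]

theorem mul_single_inv_apply {H : Type*} [Monoid H] (f : MonoidAlgebra F H) {u u' : H}
    (h1 : u * u' = 1) (h2 : u' * u = 1) (p : H) :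
    (f * single u (1 : F)).coeff p = f.coeff (p * u') := by
  rw [MonoidAlgebra.coeff_mul_single_eq_coeff_mul (p * u') (fun a _ => ?_), mul_one]
  constructor
  · intro ha; rw [← ha, mul_assoc, h1, mul_one]
  · intro ha; rw [ha, mul_assoc, h2, mul_one]

theorem single_mul_apply_eq_self {H : Type*} [Monoid H] (f : MonoidAlgebra F H) {u M : H}
    (h : ∀ N ∈ f.coeff.support, (u * N = M ↔ N = M)) :
    (single u (1 : F) * f).coeff M = f.coeff M := by
  classical
  rw [MonoidAlgebra.coeff_single_mul_eq_mul_coeff M h, one_mul]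

theorem central_eq_zero {r : MonoidAlgebra F (GBar G m)}
    (hc : ∀ b, b * r = r * b) (hnf : r ∈ SuppNF F G m)
    (heps : ∀ i : Fin m, r * epsS F G i = 0) : r = 0 := by
  classical
  by_contra h0
  obtain ⟨M, hMs, hmax⟩ :=
    Finset.exists_max_image r.coeff.support rk
      (Finsupp.support_nonempty_iff.mpr (mt MonoidAlgebra.coeff_eq_zero.mp h0))
  have hrM : r.coeff M ≠ 0 := Finsupp.mem_support_iff.mp hMs
  have hNF : NF M := by
    by_contra hn; exact hrM (hnf M hn)
  obtain ⟨i, hi⟩ := hNF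
  have h1 : single (epsEl G i) (1 : F) * r = 0 := by
    have h := hc (epsS F G i)
    rw [heps i] at h
    exact h
  have h2 : (single (epsEl G i) (1 : F) * r).coeff M = r.coeff M := by
    apply single_mul_apply_eq_self
    intro N hN
    constructor
    · intro hun
      by_cases hrow : ∀ j, N.val i j = 0
      · rw [epsEl_mul_of_row_zero hrow] at hun; exact hun
      · exfalso
        push_neg at hrow
        have hlt := rk_epsEl_mul_lt (M := N) (i := i) hrow
        rw [hun] at hlt
        exact absurd (hmax N hN) (not_le.mpr hlt)
    · intro hNM; subst hNM; exact epsEl_mul_of_row_zero hi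
  rw [h1, MonoidAlgebra.coeff_zero, Finsupp.zero_apply] at h2
  exact hrM h2.symm

end Aux3
section Aux4

variable {F : Type*} [Field F] {G : Type*} [Group G] {m : ℕ}

/-- The embedding `F[G_m] → F[Ḡ_m]`. -/
noncomputable def phiM (F : Type*) [Field F] (G : Type*) [Group G] (m : ℕ) :
    MonoidAlgebra F (GFull G m) →+* MonoidAlgebra F (GBar G m) :=
  MonoidAlgebra.mapDomainRingHom F (Submonoid.inclusion (GFull_le_GBar G m))

theorem incl_injective :
    Function.Injective (Submonoid.inclusion (GFull_le_GBar G m)) :=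
  fun a b hab => by
    have h2 := congrArg Subtype.val hab
    exact Subtype.ext h2

theorem phiM_apply_full (z : MonoidAlgebra F (GFull G m)) (p : GFull G m) :
    (phiM F G m z).coeff (Submonoid.inclusion (GFull_le_GBar G m) p) = z.coeff p :=
  Finsupp.mapDomain_apply incl_injective z.coeff p

theorem phiM_single (p : GFull G m) (c : F) :
    phiM F G m (single p c) =
      single (Submonoid.inclusion (GFull_le_GBar G m) p : GBar G m) c :=
  MonoidAlgebra.mapDomain_single

theorem phiM_center_mul_epsBar_mem {z : MonoidAlgebra F (GFull G m)}
    (hz : z ∈ Subalgebra.center F (MonoidAlgebra F (GFull G m))) :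
    phiM F G m z * epsBarAll F G m ∈
      Subalgebra.center F (MonoidAlgebra F (GBar G m)) := by
  apply mem_center_of_single
  intro u
  by_cases hNF : NF u
  · have husil : (single u (1 : F)) ∈ SuppNF F G m := single_mem_SuppNF hNF 1
    have l1 : single u (1 : F) * (phiM F G m z * epsBarAll F G m) = 0 := by
      rw [← mul_assoc]
      exact SuppNF.mul_epsBar (SuppNF.mul_mem_right husil _)
    have l2 : (phiM F G m z * epsBarAll F G m) * single u 1 = 0 := by
      rw [mul_assoc, SuppNF.epsBar_mul husil, mul_zero]
    rw [l1, l2]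
  · obtain ⟨g, hg⟩ := mem_GFull_of_not_nf hNF
    set p : GFull G m := ⟨u.val, ⟨g, hg⟩⟩ with hp
    have hip : Submonoid.inclusion (GFull_le_GBar G m) p = u := Subtype.ext rfl
    have hsing : single u (1 : F) = phiM F G m (single p 1) := by rw [phiM_single, hip]
    have hu : u = wEl g := Subtype.ext hg.symm
    calc single u (1 : F) * (phiM F G m z * epsBarAll F G m)
        = (phiM F G m (single p 1 * z)) * epsBarAll F G m := by
          rw [← mul_assoc, hsing, ← map_mul]
      _ = (phiM F G m (z * single p 1)) * epsBarAll F G m := by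
          rw [Subalgebra.mem_center_iff.mp hz (single p 1)]
      _ = phiM F G m z * (single u 1 * epsBarAll F G m) := by
          rw [map_mul, ← hsing, mul_assoc]
      _ = phiM F G m z * (epsBarAll F G m * single u 1) := by
          rw [hu, wEl_comm_epsBar]
      _ = (phiM F G m z * epsBarAll F G m) * single u 1 := by rw [mul_assoc]

end Aux4
/-- Let `I(n+1,G) = F[Ḡ_{n+1}](1−ε_{n+1})` be the left ideal generated by `1−ε_{n+1}` and
`Z̄_{0,n+1}` the center of `F[Ḡ_{n+1}]`.  Then
`I(n+1,G) ∩ Z̄_{0,n+1} = Z_{0,n+1}·(1−ε_1)⋯(1−ε_{n+1})`, where `Z_{0,n+1}` is the center of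
the group algebra `F[G_{n+1}]`, viewed inside `F[Ḡ_{n+1}]`. -/
theorem ideal_inter_center (F : Type*) [Field F] (G : Type*) [Group G] (n : ℕ) :
    {x : MonoidAlgebra F (GBar G (n + 1)) |
        ∃ y, x = y * (1 - single (epsEl G (Fin.last n)) (1 : F))} ∩
      (Subalgebra.center F (MonoidAlgebra F (GBar G (n + 1))) : Set _) =
    (fun z => (MonoidAlgebra.mapDomainRingHom F
        (Submonoid.inclusion (GFull_le_GBar G (n + 1))) z) * epsBarAll F G (n + 1)) ''
      (Subalgebra.center F (MonoidAlgebra F (GFull G (n + 1))) : Set _) := by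
  classical
  have hphi : (MonoidAlgebra.mapDomainRingHom F
      (Submonoid.inclusion (GFull_le_GBar G (n + 1)))) = phiM F G (n + 1) := rfl
  have hff : (1 - single (epsEl G (Fin.last n)) (1 : F)) = ffS F G (Fin.last n) := rfl
  ext x
  simp only [Set.mem_inter_iff, Set.mem_setOf_eq, Set.mem_image, SetLike.mem_coe, hphi]
  constructor
  · rintro ⟨⟨y, hy⟩, hxc⟩
    have hx : ∀ b, b * x = x * b := Subalgebra.mem_center_iff.mp hxc
    have hlast : x * epsS F G (Fin.last n) = 0 := by
      rw [hy, hff, mul_assoc, ffS_mul_epsS, mul_zero]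
    have heps : ∀ i : Fin (n + 1), x * epsS F G i = 0 := by
      intro i
      set w : Wreath G (n + 1) := ⟨1, Equiv.swap i (Fin.last n)⟩ with hw
      have hwr : w.right = Equiv.swap i (Fin.last n) := rfl
      have hconj : epsEl G i * wEl w = wEl w * epsEl G (Fin.last n) := by
        have h := epsEl_conj w (Fin.last n)
        rwa [hwr, Equiv.swap_apply_right] at h
      have hA : epsS F G i * single (wEl w) (1 : F) =
          single (wEl w) 1 * epsS F G (Fin.last n) := by
        rw [epsS, epsS, MonoidAlgebra.single_mul_single, MonoidAlgebra.single_mul_single,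
          hconj]
      have hWW : single (wEl w) (1 : F) * single (wEl w⁻¹) 1 = 1 := by
        rw [MonoidAlgebra.single_mul_single, wEl_mul_inv, one_mul, MonoidAlgebra.one_def]
      have hstep : (x * epsS F G i) * single (wEl w) 1 = 0 := by
        rw [mul_assoc, hA, ← mul_assoc, ← hx (single (wEl w) 1), mul_assoc, hlast, mul_zero]
      calc x * epsS F G i
          = (x * epsS F G i) * (single (wEl w) 1 * single (wEl w⁻¹) 1) := by
            rw [hWW, mul_one]
        _ = ((x * epsS F G i) * single (wEl w) 1) * single (wEl w⁻¹) 1 :=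
            (mul_assoc _ _ _).symm
        _ = 0 := by rw [hstep, zero_mul]
    set z : MonoidAlgebra F (GFull G (n + 1)) := MonoidAlgebra.ofCoeff (Finsupp.comapDomain (Submonoid.inclusion (GFull_le_GBar G (n + 1))) x.coeff
      (incl_injective.injOn)) with hzdef
    have hz_apply : ∀ p : GFull G (n + 1),
        z.coeff p = x.coeff (Submonoid.inclusion (GFull_le_GBar G (n + 1)) p) := by
      intro p
      rw [hzdef]
      exact Finsupp.comapDomain_apply _ _ _ p
    have hzc : z ∈ Subalgebra.center F (MonoidAlgebra F (GFull G (n + 1))) := by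
      apply mem_center_of_single
      intro u
      obtain ⟨g, hg⟩ := u.prop
      set u' : GFull G (n + 1) := ⟨wreathHom G (n + 1) g⁻¹, ⟨g⁻¹, rfl⟩⟩ with hu'
      have h1 : u * u' = 1 := by
        apply Subtype.ext
        show u.val * (wreathHom G (n + 1) g⁻¹) = _
        rw [← hg, ← map_mul, mul_inv_cancel, map_one]
        rfl
      have h2 : u' * u = 1 := by
        apply Subtype.ext
        show (wreathHom G (n + 1) g⁻¹) * u.val = _
        rw [← hg, ← map_mul, inv_mul_cancel, map_one]
        rfl
      ext p
      rw [single_inv_mul_apply z h1 h2 p, mul_single_inv_apply z h1 h2 p, hz_apply,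
        hz_apply]
      set ι := Submonoid.inclusion (GFull_le_GBar G (n + 1)) with hι
      have hmul1 : ι (u' * p) = ι u' * ι p := rfl
      have hmul2 : ι (p * u') = ι p * ι u' := rfl
      rw [hmul1, hmul2]
      have hV1 : ι u * ι u' = 1 :=
        Subtype.ext (show (u.val * u'.val) = _ from congrArg Subtype.val h1)
      have hV2 : ι u' * ι u = 1 :=
        Subtype.ext (show (u'.val * u.val) = _ from congrArg Subtype.val h2)
      have e1 := single_inv_mul_apply x hV1 hV2 (ι p)
      have e2 := mul_single_inv_apply x hV1 hV2 (ι p)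
      rw [← e1, ← e2, hx (single (ι u) 1)]
    refine ⟨z, hzc, ?_⟩
    set w := phiM F G (n + 1) z * epsBarAll F G (n + 1) with hwdef
    have hwc : ∀ b, b * w = w * b :=
      Subalgebra.mem_center_iff.mp (phiM_center_mul_epsBar_mem hzc)
    have hr : x - w = 0 := by
      apply central_eq_zero (hc := fun b => by rw [mul_sub, sub_mul, hx b, hwc b])
      · have hsub1 : x - phiM F G (n + 1) z ∈ SuppNF F G (n + 1) := by
          intro M hM
          have hMf : M.val ∈ GFull G (n + 1) := mem_GFull_of_not_nf hM
          have hMic : Submonoid.inclusion (GFull_le_GBar G (n + 1)) ⟨M.val, hMf⟩ = M :=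
            Subtype.ext rfl
          rw [MonoidAlgebra.coeff_sub, Finsupp.sub_apply]
          have hphiz : (phiM F G (n + 1) z).coeff M = x.coeff M := by
            conv_lhs => rw [← hMic]
            rw [phiM_apply_full, hz_apply, hMic]
          rw [hphiz, sub_self]
        have hsub2 : phiM F G (n + 1) z * (epsBarAll F G (n + 1) - 1) ∈ SuppNF F G (n + 1) :=
          SuppNF.mul_mem_left epsBar_sub_one_mem _
        have hsplit : x - w =
            (x - phiM F G (n + 1) z) - phiM F G (n + 1) z * (epsBarAll F G (n + 1) - 1) := by
          rw [hwdef, mul_sub, mul_one]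
          abel
        rw [hsplit]
        exact Submodule.sub_mem _ hsub1 hsub2
      · intro i
        rw [sub_mul, heps i, hwdef, mul_assoc, epsBar_mul_epsS, mul_zero, zero_sub, neg_zero]
    exact (sub_eq_zero.mp hr).symm
  · rintro ⟨z, hzc, rfl⟩
    refine ⟨?_, phiM_center_mul_epsBar_mem hzc⟩
    obtain ⟨Q, -, h2⟩ := epsBar_decomp (F := F) (G := G) (Fin.last n)
    refine ⟨phiM F G (n + 1) z * Q, ?_⟩
    rw [mul_assoc, hff, ← h2]
end
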